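/- Let W_α be a bounded unilateral weighted shift with positive weights. If W_αⁿ is quasinormal, then the weight sequence is periodic with period at most n: α_{j+n} = α_j for all j ≥ 0. -/

import Mathlib

noncomputable section

/-- The standard basis vectors of `ℓ²(ℕ)`. -/
def e (j : ℕ) : lp (fun _ : ℕ => ℂ) 2 := lp.single 2 j 1

lemma e_inner_apply (x : lp (fun _ : ℕ => ℂ) 2) (k : ℕ) :
    @inner ℂ _ _ (e k) x = x k := by
  rw [e, lp.inner_single_left]
  simp

lemma e_apply (j k : ℕ) : (e j : ∀ _ : ℕ, ℂ) k = if k = j then 1 else 0 := by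
  by_cases h : k = j
  · subst h; simp [e, lp.single_apply_self]
  · simp [e, lp.single_apply_ne _ _ _ h, h]

lemma e_norm (j : ℕ) : ‖e j‖ = 1 := by
  have := lp.norm_single (p := 2) (E := fun _ : ℕ => ℂ)
    (by norm_num) j (1 : ℂ)
  simpa [e] using this

lemma e_ne_zero (j : ℕ) : e j ≠ 0 := by
  intro h
  have := e_norm j
  rw [h, norm_zero] at this
  norm_num at this

/-- If `W_α` is a bounded unilateral weighted shift with positive weights and `W_αⁿ` is
quasinormal, then the weight sequence is periodic with period at most `n`:
`α_{j+n} = α_j` for all `j`. -/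
theorem weights_periodic_of_pow_quasinormal
    (n : ℕ) (α : ℕ → ℝ) (hpos : ∀ j, 0 < α j)
    (W : lp (fun _ : ℕ => ℂ) 2 →L[ℂ] lp (fun _ : ℕ => ℂ) 2)
    (hW : ∀ j : ℕ, W (e j) = (α j : ℂ) • e (j + 1))
    (hq : W ^ n * (star (W ^ n) * W ^ n) = (star (W ^ n) * W ^ n) * W ^ n) :
    ∀ j : ℕ, α (j + n) = α j := by
  rcases Nat.eq_zero_or_pos n with hn | hn
  · subst hn; simp
  -- products of weights
  set β : ℕ → ℝ := fun j => ∏ i ∈ Finset.range n, α (j + i) with hβdef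
  have hβpos : ∀ j, 0 < β j := fun j => Finset.prod_pos fun i _ => hpos _
  -- action of W^m on basis vectors
  have hpow : ∀ m j, (W ^ m) (e j) =
      ((∏ i ∈ Finset.range m, α (j + i) : ℝ) : ℂ) • e (j + m) := by
    intro m
    induction m with
    | zero => intro j; simp
    | succ m ih =>
      intro j
      rw [pow_succ, ContinuousLinearMap.mul_apply, hW j, map_smul, ih (j + 1),
        smul_smul]
      have h1 : (∏ i ∈ Finset.range (m + 1), α (j + i))
          = α j * ∏ i ∈ Finset.range m, α (j + 1 + i) := by
        rw [Finset.prod_range_succ']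
        rw [mul_comm]
        congr 1
        · apply Finset.prod_congr rfl
          intro i _
          congr 1
          omega
      rw [h1]
      have h2 : j + 1 + m = j + (m + 1) := by omega
      rw [h2]
      push_cast
      ring_nf
  have hpowβ : ∀ j, (W ^ n) (e j) = ((β j : ℝ) : ℂ) • e (j + n) := fun j => hpow n j
  -- (W^n)* (W^n) acts diagonally
  have hA : ∀ j, (star (W ^ n) * W ^ n) (e j) = (((β j) ^ 2 : ℝ) : ℂ) • e j := by
    intro j
    apply lp.ext
    funext k
    have lhs : ((star (W ^ n) * W ^ n) (e j) : ∀ _ : ℕ, ℂ) k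
        = @inner ℂ _ _ ((W ^ n) (e k)) ((W ^ n) (e j)) := by
      rw [← e_inner_apply, ContinuousLinearMap.mul_apply,
        ContinuousLinearMap.star_eq_adjoint, ContinuousLinearMap.adjoint_inner_right]
    rw [lhs, hpowβ j, hpowβ k, inner_smul_left, inner_smul_right, e_inner_apply,
      e_apply, lp.coeFn_smul, Pi.smul_apply, e_apply]
    by_cases h : k = j
    · subst h
      simp [pow_two]
    · have h' : ¬ (k + n = j + n) := by omega
      simp [h, h']
  -- scalar equation from quasinormality
  have hβper : ∀ j, β (j + n) = β j := by
    intro j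
    have hL : (W ^ n * (star (W ^ n) * W ^ n)) (e j)
        = (((β j) ^ 2 * β j : ℝ) : ℂ) • e (j + n) := by
      rw [ContinuousLinearMap.mul_apply, hA j, map_smul, hpowβ j, smul_smul]
      congr 1
      push_cast
      ring
    have hR : ((star (W ^ n) * W ^ n) * W ^ n) (e j)
        = ((β j * (β (j + n)) ^ 2 : ℝ) : ℂ) • e (j + n) := by
      rw [ContinuousLinearMap.mul_apply, hpowβ j, map_smul, hA (j + n), smul_smul]
      congr 1
      push_cast
      ring
    have h : (((β j) ^ 2 * β j : ℝ) : ℂ) • e (j + n)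
        = ((β j * (β (j + n)) ^ 2 : ℝ) : ℂ) • e (j + n) := by
      rw [← hL, ← hR, hq]
    have hsc : (((β j) ^ 2 * β j : ℝ) : ℂ) = ((β j * (β (j + n)) ^ 2 : ℝ) : ℂ) := by
      have h2 := sub_eq_zero.mpr h
      rw [← sub_smul, smul_eq_zero] at h2
      rcases h2 with h0 | h0
      · exact sub_eq_zero.mp h0
      · exact absurd h0 (e_ne_zero _)
    have hre : (β j) ^ 2 * β j = β j * (β (j + n)) ^ 2 := by
      exact_mod_cast hsc
    have h2 : β j * (β j) ^ 2 = β j * (β (j + n)) ^ 2 := by linarith [hre]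
    have h3 : (β j) ^ 2 = (β (j + n)) ^ 2 := mul_left_cancel₀ (hβpos j).ne' h2
    have h4 := (sq_eq_sq_iff_abs_eq_abs _ _).mp h3
    rwa [abs_of_pos (hβpos j), abs_of_pos (hβpos (j + n)), eq_comm] at h4
  -- weights are bounded by ‖W‖
  have hbound : ∀ j, α j ≤ ‖W‖ := by
    intro j
    have h1 : ‖W (e j)‖ = α j := by
      rw [hW j, norm_smul, e_norm, Complex.norm_real, mul_one,
        Real.norm_eq_abs, abs_of_pos (hpos j)]
    have h2 : ‖W (e j)‖ ≤ ‖W‖ * ‖e j‖ := W.le_opNorm _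
    rw [e_norm, mul_one] at h2
    linarith [h1 ▸ h2]
  -- ratio relation between consecutive weight products
  have hstep : ∀ j, α (j + n) * β j = α j * β (j + 1) := by
    intro j
    have h1 : α (j + n) * β j = ∏ i ∈ Finset.range (n + 1), α (j + i) := by
      rw [Finset.prod_range_succ]; ring
    have h2 : α j * β (j + 1) = ∏ i ∈ Finset.range (n + 1), α (j + i) := by
      rw [Finset.prod_range_succ', mul_comm]
      congr 1
      apply Finset.prod_congr rfl
      intro i _
      congr 1
      omega
    rw [h1, h2]
  have hratio : ∀ j, α (j + n) = α j * (β (j + 1) / β j) := by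
    intro j
    rw [mul_div_assoc', eq_div_iff (hβpos j).ne']
    linear_combination hstep j
  have hβperk : ∀ k j, β (j + k * n) = β j := by
    intro k
    induction k with
    | zero => intro j; simp
    | succ k ih =>
      intro j
      have h1 : j + (k + 1) * n = (j + k * n) + n := by ring
      rw [h1, hβper, ih]
  have hgeo : ∀ k j, α (j + k * n) = α j * (β (j + 1) / β j) ^ k := by
    intro k
    induction k with
    | zero => intro j; simp
    | succ k ih =>
      intro j
      have h1 : j + (k + 1) * n = (j + k * n) + n := by ring
      rw [h1, hratio, ih j]
      have h2 : β (j + k * n + 1) = β (j + 1) := by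
        have : j + k * n + 1 = (j + 1) + k * n := by omega
        rw [this, hβperk]
      rw [hβperk, h2, pow_succ]
      ring
  -- weights are eventually non-increasing along the period
  have hle : ∀ j, α (j + n) ≤ α j := by
    intro j
    by_contra h'
    push_neg at h'
    set r : ℝ := β (j + 1) / β j with hr
    have hr1 : 1 < r := by
      have := hratio j
      rw [← hr] at this
      by_contra hr'
      push_neg at hr'
      have : α (j + n) ≤ α j := by
        calc α (j + n) = α j * r := by rw [hratio j]
        _ ≤ α j * 1 := by
            apply mul_le_mul_of_nonneg_left hr' (hpos j).le
        _ = α j := mul_one _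
      linarith
    obtain ⟨k, hk⟩ := pow_unbounded_of_one_lt (R := ℝ) (‖W‖ / α j) hr1
    have h1 : α (j + k * n) = α j * r ^ k := hgeo k j
    have h2 : ‖W‖ < α j * r ^ k := by
      rw [div_lt_iff₀ (hpos j)] at hk
      linarith [hk]
    have := hbound (j + k * n)
    linarith
  -- conclude equality from periodicity of products
  intro j
  refine le_antisymm (hle j) ?_
  by_contra h'
  push_neg at h'
  have hlt : β (j + n) < β j := by
    have hform : β (j + n) = ∏ i ∈ Finset.range n, α ((j + i) + n) := by
      apply Finset.prod_congr rfl
      intro i _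
      congr 1
      omega
    rw [hform]
    apply Finset.prod_lt_prod
    · intro i _; exact hpos _
    · intro i _; exact hle _
    · exact ⟨0, Finset.mem_range.mpr hn, by simpa using h'⟩
  have := hβper j
  linarith
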